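/- Let E and F be completely integrable distributions (involutive subbundles, treated as Lie subalgebras of vector fields) with E ∩ F = 0, and define inductively F^{-1} = F, F^i = {Y ∈ F^{i-1} : [Y, E] ⊆ F^{i-1} + E} for i ≥ 0. Then each F^i is closed under Lie bracket (involutive). -/
import Mathlib


/-- One step of the Freeman filtration: given `E` and the previous term `S`,
the next term is `{Y ∈ S : ⁅Y, E⁆ ⊆ S + E}`. -/
def freemanStep {k L : Type*} [Field k] [LieRing L] [LieAlgebra k L]
    (E S : Submodule k L) : Submodule k L where
  carrier := {Y | Y ∈ S ∧ ∀ X ∈ E, ⁅Y, X⁆ ∈ S ⊔ E}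
  add_mem' := by
    intro a b ha hb
    refine ⟨S.add_mem ha.1 hb.1, fun X hX => ?_⟩
    rw [add_lie]
    exact Submodule.add_mem _ (ha.2 X hX) (hb.2 X hX)
  zero_mem' := by
    refine ⟨S.zero_mem, fun X hX => ?_⟩
    rw [zero_lie]; exact Submodule.zero_mem _
  smul_mem' := by
    intro c a ha
    refine ⟨S.smul_mem c ha.1, fun X hX => ?_⟩
    rw [smul_lie]
    exact Submodule.smul_mem _ c (ha.2 X hX)

/-- The Freeman filtration `F^{-1} = F`, `F^i = {Y ∈ F^{i-1} : ⁅Y, E⁆ ⊆ F^{i-1} + E}`,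
indexed so that `freemanFilt E F n = F^{n-1}`. -/
def freemanFilt {k L : Type*} [Field k] [LieRing L] [LieAlgebra k L]
    (E F : Submodule k L) : ℕ → Submodule k L
  | 0 => F
  | n + 1 => freemanStep E (freemanFilt E F n)

/-- Let `E`, `F` be Lie subalgebras (completely integrable
distributions) of a Lie algebra `L` with `E ∩ F = 0`, and define inductively
`F^{-1} = F`, `F^i = {Y ∈ F^{i-1} : [Y, E] ⊆ F^{i-1} + E}` for `i ≥ 0`.  Then each
`F^i` is closed under the Lie bracket (involutive). -/
theorem stmt14 (k L : Type*) [Field k] [CharZero k] [LieRing L] [LieAlgebra k L]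
    (E F : LieSubalgebra k L) (hEF : E.toSubmodule ⊓ F.toSubmodule = ⊥) :
    ∀ n : ℕ, ∀ Y Z : L, Y ∈ freemanFilt E.toSubmodule F.toSubmodule n →
      Z ∈ freemanFilt E.toSubmodule F.toSubmodule n →
      ⁅Y, Z⁆ ∈ freemanFilt E.toSubmodule F.toSubmodule n := by
  intro n
  induction n with
  | zero => exact fun Y Z hY hZ => F.lie_mem hY hZ
  | succ n ih =>
    intro Y Z hY hZ
    obtain ⟨hYS, hYE⟩ := hY
    obtain ⟨hZS, hZE⟩ := hZ
    refine ⟨ih Y Z hYS hZS, fun X hX => ?_⟩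
    have jac : ⁅⁅Y, Z⁆, X⁆ = ⁅Y, ⁅Z, X⁆⁆ - ⁅Z, ⁅Y, X⁆⁆ := by
      rw [lie_lie]
    rw [jac]
    have key : ∀ W V : L,
        W ∈ freemanFilt E.toSubmodule F.toSubmodule (n + 1) →
        V ∈ freemanFilt E.toSubmodule F.toSubmodule n ⊔ E.toSubmodule →
        ⁅W, V⁆ ∈ freemanFilt E.toSubmodule F.toSubmodule n ⊔ E.toSubmodule := by
      intro W V hW hV
      obtain ⟨hWS, hWE⟩ := hW
      obtain ⟨s, hs, e, he, rfl⟩ := Submodule.mem_sup.mp hV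
      rw [lie_add]
      exact Submodule.add_mem _
        (Submodule.mem_sup_left (ih W s hWS hs)) (hWE e he)
    exact Submodule.sub_mem _
      (key Y ⁅Z, X⁆ ⟨hYS, hYE⟩ (hZE X hX))
      (key Z ⁅Y, X⁆ ⟨hZS, hZE⟩ (hYE X hX))
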